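/- arXiv:2605.17747 — 2 statements merged into one kernel-verified Lean document; each statement's English description precedes it below -/
import Mathlib

section
/- Let (L, ∘_λ, [·_λ ·]) be a transposed Poisson conformal superalgebra. Then for all homogeneous x, y, z ∈ L the following identity holds: (−1)^{|x||z|} x ∘_λ [y_μ z] + (−1)^{|x||y|} y ∘_μ [z_{−∂−λ} x] + (−1)^{|y||z|} z ∘_{−∂−λ−μ} [x_λ y] = 0. -/
open Polynomial
open scoped TensorProduct

noncomputable section

namespace TPCSAFormal

/-- The super-sign `(-1)^{i·j}` for parities `i, j ∈ ℤ/2ℤ`. -/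
def sgn (i j : ZMod 2) : ℂ := (-1 : ℂ) ^ (i.val * j.val)

variable (L : Type*) [AddCommGroup L] [Module ℂ L]
  [Module (Polynomial ℂ) L] [IsScalarTower ℂ (Polynomial ℂ) L]

/-- A conformal `λ`-product on the `ℂ[∂]`-module `L`, recorded by its family of `n`-th
product coefficients: `a ∘_λ b = ∑_n λ^n • coeff n a b`, with finitely many nonzero terms.
This is exactly the data of a `ℂ`-bilinear map `L ⊗ L → ℂ[λ] ⊗ L`. -/
structure ConformalProduct where
  coeff : ℕ → L →ₗ[ℂ] L →ₗ[ℂ] L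
  coeff_finite : ∀ a b : L, ∃ N : ℕ, ∀ n : ℕ, N ≤ n → coeff n a b = 0

variable {L}

/-- The value `a ∘_λ b` of the `λ`-product at `λ ∈ ℂ`.  Since `ℂ` is infinite, identities
between such values for all `λ` are equivalent to the corresponding polynomial identities. -/
def ConformalProduct.mul (m : ConformalProduct L) (lam : ℂ) (a b : L) : L :=
  ∑ᶠ n : ℕ, lam ^ n • m.coeff n a b

/-- The value `a ∘_{-∂-λ} b`, where `∂` acts on `L` as scalar multiplication by
`X ∈ ℂ[∂]` (the variable `λ` being replaced by the operator `-∂-λ`). -/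
def ConformalProduct.cmul (m : ConformalProduct L) (lam : ℂ) (a b : L) : L :=
  ∑ᶠ n : ℕ, ((-((X : Polynomial ℂ) + C lam)) ^ n) • m.coeff n a b

variable (L) in
/-- A `ℤ₂`-grading on `L` making it a `ℤ₂`-graded `ℂ[∂]`-module: `L = L₀ ⊕ L₁` with
`∂ L_i ⊆ L_i`, where `∂` acts as multiplication by `X ∈ ℂ[∂]`. -/
structure SuperModule where
  grade : ZMod 2 → Submodule ℂ L
  isInternal : DirectSum.IsInternal grade
  X_smul_mem : ∀ (i : ZMod 2) (a : L), a ∈ grade i → (X : Polynomial ℂ) • a ∈ grade i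

/-- `m` is an even `λ`-product on the `ℤ₂`-graded `ℂ[∂]`-module `(L, S)`:
it is even with respect to the grading and conformally sesquilinear. -/
structure IsLambdaProduct (S : SuperModule L) (m : ConformalProduct L) : Prop where
  even : ∀ (i j : ZMod 2) (a b : L), a ∈ S.grade i → b ∈ S.grade j →
    ∀ n : ℕ, m.coeff n a b ∈ S.grade (i + j)
  sesq_left : ∀ (lam : ℂ) (a b : L),
    m.mul lam ((X : Polynomial ℂ) • a) b = (-lam) • m.mul lam a b
  sesq_right : ∀ (lam : ℂ) (a b : L),
    m.mul lam a ((X : Polynomial ℂ) • b) =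
      (X : Polynomial ℂ) • m.mul lam a b + lam • m.mul lam a b

/-- `(L, S, m)` is a commutative associative conformal superalgebra. -/
structure IsCommAssoc (S : SuperModule L) (m : ConformalProduct L)
    extends IsLambdaProduct S m : Prop where
  comm : ∀ (i j : ZMod 2) (a b : L), a ∈ S.grade i → b ∈ S.grade j →
    ∀ lam : ℂ, m.mul lam a b = sgn i j • m.cmul lam b a
  assoc : ∀ (lam mu : ℂ) (a b c : L),
    m.mul lam a (m.mul mu b c) = m.mul (lam + mu) (m.mul lam a b) c

/-- `(L, S, br)` is a Lie conformal superalgebra. -/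
structure IsLie (S : SuperModule L) (br : ConformalProduct L)
    extends IsLambdaProduct S br : Prop where
  skew : ∀ (i j : ZMod 2) (a b : L), a ∈ S.grade i → b ∈ S.grade j →
    ∀ lam : ℂ, br.mul lam a b = -(sgn i j • br.cmul lam b a)
  jacobi : ∀ (i j : ZMod 2) (a b : L), a ∈ S.grade i → b ∈ S.grade j →
    ∀ (c : L) (lam mu : ℂ),
      br.mul lam a (br.mul mu b c) =
        br.mul (lam + mu) (br.mul lam a b) c + sgn i j • br.mul mu b (br.mul lam a c)

/-- `(L, S, m, br)` is a transposed Poisson conformal superalgebra. -/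
structure IsTPCSA (S : SuperModule L) (m br : ConformalProduct L) : Prop where
  commAssoc : IsCommAssoc S m
  lie : IsLie S br
  transposedLeibniz : ∀ (i j : ZMod 2) (a b : L), a ∈ S.grade i → b ∈ S.grade j →
    ∀ (c : L) (lam mu : ℂ),
      (2 : ℂ) • m.mul lam a (br.mul mu b c) =
        br.mul (lam + mu) (m.mul lam a b) c + sgn i j • br.mul mu b (m.mul lam a c)

/-- `(L, S, m, br)` is a Poisson conformal superalgebra. -/
structure IsPCSA (S : SuperModule L) (m br : ConformalProduct L) : Prop where
  commAssoc : IsCommAssoc S m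
  lie : IsLie S br
  leibniz : ∀ (i j : ZMod 2) (a b : L), a ∈ S.grade i → b ∈ S.grade j →
    ∀ (c : L) (lam mu : ℂ),
      br.mul lam a (m.mul mu b c) =
        m.mul (lam + mu) (br.mul lam a b) c + sgn i j • m.mul mu b (br.mul lam a c)

/-- `(L, S, br, α)` is a Hom-Lie conformal superalgebra. -/
structure IsHomLie (S : SuperModule L) (br : ConformalProduct L) (α : L → L)
    extends IsLambdaProduct S br : Prop where
  map_smul_add : ∀ (c : ℂ) (a b : L), α (c • a + b) = c • α a + α b
  map_grade : ∀ (i : ZMod 2) (a : L), a ∈ S.grade i → α a ∈ S.grade i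
  commute_partial : ∀ a : L, α ((X : Polynomial ℂ) • a) = (X : Polynomial ℂ) • α a
  skew : ∀ (i j : ZMod 2) (a b : L), a ∈ S.grade i → b ∈ S.grade j →
    ∀ lam : ℂ, br.mul lam a b = -(sgn i j • br.cmul lam b a)
  homJacobi : ∀ (i j : ZMod 2) (a b : L), a ∈ S.grade i → b ∈ S.grade j →
    ∀ (c : L) (lam mu : ℂ),
      br.mul lam (α a) (br.mul mu b c) =
        br.mul (lam + mu) (br.mul lam a b) (α c) + sgn i j • br.mul mu (α b) (br.mul lam a c)

/-- `(L, S, p)` is a left-symmetric conformal superalgebra. -/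
structure IsLeftSymmetric (S : SuperModule L) (p : ConformalProduct L)
    extends IsLambdaProduct S p : Prop where
  leftSym : ∀ (i j : ZMod 2) (a b : L), a ∈ S.grade i → b ∈ S.grade j →
    ∀ (c : L) (lam mu : ℂ),
      p.mul (lam + mu) (p.mul lam a b) c - p.mul lam a (p.mul mu b c) =
        sgn i j • (p.mul (lam + mu) (p.mul mu b a) c - p.mul mu b (p.mul lam a c))

/-- `(L, S, p)` is a (left) Novikov conformal superalgebra. -/
structure IsNovikov (S : SuperModule L) (p : ConformalProduct L)
    extends IsLeftSymmetric S p : Prop where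
  novikov : ∀ (j k : ZMod 2) (b c : L), b ∈ S.grade j → c ∈ S.grade k →
    ∀ (a : L) (lam mu : ℂ),
      p.mul (lam + mu) (p.mul lam a b) c = sgn j k • p.cmul mu (p.mul lam a c) b

/-- `(L, S, mc, p)` is a Novikov-Poisson conformal superalgebra. -/
structure IsNovikovPoisson (S : SuperModule L) (mc p : ConformalProduct L) : Prop where
  commAssoc : IsCommAssoc S mc
  novikov : IsNovikov S p
  compat₁ : ∀ (lam mu : ℂ) (a b c : L),
    p.mul (lam + mu) (mc.mul lam a b) c = mc.mul lam a (p.mul mu b c)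
  compat₂ : ∀ (i j : ZMod 2) (a b : L), a ∈ S.grade i → b ∈ S.grade j →
    ∀ (c : L) (lam mu : ℂ),
      mc.mul (lam + mu) (p.mul lam a b) c - p.mul lam a (mc.mul mu b c) =
        sgn i j • (mc.mul (lam + mu) (p.mul mu b a) c - p.mul mu b (mc.mul lam a c))

/-- `(L, S, mc, p)` is a pre-Lie commutative conformal superalgebra. -/
structure IsPreLieComm (S : SuperModule L) (mc p : ConformalProduct L) : Prop where
  commAssoc : IsCommAssoc S mc
  leftSymmetric : IsLeftSymmetric S p
  compat : ∀ (i j : ZMod 2) (a b : L), a ∈ S.grade i → b ∈ S.grade j →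
    ∀ (c : L) (lam mu : ℂ),
      p.mul lam a (mc.mul mu b c) =
        mc.mul (lam + mu) (p.mul lam a b) c + sgn i j • mc.mul mu b (p.mul lam a c)

/-- `(L, S, mc, p)` is a pre-Lie Poisson conformal superalgebra. -/
structure IsPreLiePoisson (S : SuperModule L) (mc p : ConformalProduct L) : Prop where
  commAssoc : IsCommAssoc S mc
  leftSymmetric : IsLeftSymmetric S p
  compat₁ : ∀ (lam mu : ℂ) (a b c : L),
    p.mul (lam + mu) (mc.mul lam a b) c = mc.mul lam a (p.mul mu b c)
  compat₂ : ∀ (i j : ZMod 2) (a b : L), a ∈ S.grade i → b ∈ S.grade j →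
    ∀ (c : L) (lam mu : ℂ),
      mc.mul (lam + mu) (p.mul lam a b) c - p.mul lam a (mc.mul mu b c) =
        sgn i j • (mc.mul (lam + mu) (p.mul mu b a) c - p.mul mu b (mc.mul lam a c))



/-! ### Auxiliary lemmas -/

section Aux

open Finset

lemma val_lemmas : ((0:ZMod 2).val = 0 ∧ (1:ZMod 2).val = 1 ∧ (2:ZMod 2).val = 0) := by decide

lemma sgn_cases (i j : ZMod 2) : sgn i j = 1 ∨ sgn i j = -1 := by
  fin_cases i <;> fin_cases j <;>
    simp [sgn, val_lemmas.1, val_lemmas.2.1, val_lemmas.2.2, ZMod.val]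

lemma sgn_sq (i j : ZMod 2) : sgn i j * sgn i j = 1 := by
  rcases sgn_cases i j with h | h <;> rw [h] <;> norm_num

lemma sgn_comm' (i j : ZMod 2) : sgn i j = sgn j i := by rw [sgn, sgn, Nat.mul_comm]

lemma sgnA (i j k : ZMod 2) : sgn (i+j) k * (sgn k i * sgn j (i+k)) = sgn i j := by
  obtain rfl | rfl := (by decide : ∀ a : ZMod 2, a = 0 ∨ a = 1) i
  all_goals obtain rfl | rfl := (by decide : ∀ a : ZMod 2, a = 0 ∨ a = 1) j
  all_goals obtain rfl | rfl := (by decide : ∀ a : ZMod 2, a = 0 ∨ a = 1) k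
  all_goals
    norm_num [sgn, val_lemmas.1, val_lemmas.2.1, val_lemmas.2.2, show (1 + 1 : ZMod 2) = 0 from rfl]

lemma sgnB (i j k : ZMod 2) : sgn (i+j) k * (sgn k i * sgn j k) = 1 := by
  obtain rfl | rfl := (by decide : ∀ a : ZMod 2, a = 0 ∨ a = 1) i
  all_goals obtain rfl | rfl := (by decide : ∀ a : ZMod 2, a = 0 ∨ a = 1) j
  all_goals obtain rfl | rfl := (by decide : ∀ a : ZMod 2, a = 0 ∨ a = 1) k
  all_goals
    norm_num [sgn, val_lemmas.1, val_lemmas.2.1, val_lemmas.2.2, show (1 + 1 : ZMod 2) = 0 from rfl]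

lemma sgnC (i j k : ZMod 2) : sgn j k * sgn (i+j) k = sgn i k := by
  obtain rfl | rfl := (by decide : ∀ a : ZMod 2, a = 0 ∨ a = 1) i
  all_goals obtain rfl | rfl := (by decide : ∀ a : ZMod 2, a = 0 ∨ a = 1) j
  all_goals obtain rfl | rfl := (by decide : ∀ a : ZMod 2, a = 0 ∨ a = 1) k
  all_goals
    norm_num [sgn, val_lemmas.1, val_lemmas.2.1, val_lemmas.2.2, show (1 + 1 : ZMod 2) = 0 from rfl]

/-- Commuting a `ℂ`-scalar past a `ℂ[X]`-scalar. -/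
lemma csmul_comm (c : ℂ) (P : Polynomial ℂ) (v : L) : P • c • v = c • P • v := by
  rw [← algebraMap_smul (Polynomial ℂ) c v, ← mul_smul,
    ← algebraMap_smul (Polynomial ℂ) c (P • v), ← mul_smul, mul_comm]

lemma Cpow_smul (c : ℂ) (n : ℕ) (v : L) : ((C c : Polynomial ℂ) ^ n) • v = c ^ n • v := by
  rw [← map_pow, ← Polynomial.algebraMap_eq, algebraMap_smul]

lemma Csmul (c : ℂ) (v : L) : (C c : Polynomial ℂ) • v = c • v := by
  rw [← Polynomial.algebraMap_eq, algebraMap_smul]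

namespace ConformalProduct

lemma mul_eq_sum (m : ConformalProduct L) (lam : ℂ) (a b : L) {N : ℕ}
    (h : ∀ n, N ≤ n → m.coeff n a b = 0) :
    m.mul lam a b = ∑ n ∈ Finset.range N, lam ^ n • m.coeff n a b := by
  refine finsum_eq_sum_of_support_subset _ ?_
  intro n hn
  simp only [Function.mem_support, ne_eq] at hn
  simp only [Finset.coe_range, Set.mem_Iio]
  by_contra hlt
  push_neg at hlt
  exact hn (by rw [h n hlt, smul_zero])

lemma cmul_eq_sum (m : ConformalProduct L) (lam : ℂ) (a b : L) {N : ℕ}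
    (h : ∀ n, N ≤ n → m.coeff n a b = 0) :
    m.cmul lam a b
      = ∑ n ∈ Finset.range N, ((-((X : Polynomial ℂ) + C lam)) ^ n) • m.coeff n a b := by
  refine finsum_eq_sum_of_support_subset _ ?_
  intro n hn
  simp only [Function.mem_support, ne_eq] at hn
  simp only [Finset.coe_range, Set.mem_Iio]
  by_contra hlt
  push_neg at hlt
  exact hn (by rw [h n hlt, smul_zero])

lemma mul_add_left (m : ConformalProduct L) (lam : ℂ) (a a' b : L) :
    m.mul lam (a + a') b = m.mul lam a b + m.mul lam a' b := by
  obtain ⟨N1, h1⟩ := m.coeff_finite a b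
  obtain ⟨N2, h2⟩ := m.coeff_finite a' b
  have h1' : ∀ n, max N1 N2 ≤ n → m.coeff n a b = 0 := fun n hn => h1 n (le_trans (le_max_left _ _) hn)
  have h2' : ∀ n, max N1 N2 ≤ n → m.coeff n a' b = 0 := fun n hn => h2 n (le_trans (le_max_right _ _) hn)
  have h3 : ∀ n, max N1 N2 ≤ n → m.coeff n (a + a') b = 0 := fun n hn => by
    rw [map_add, LinearMap.add_apply, h1' n hn, h2' n hn, add_zero]
  rw [m.mul_eq_sum lam _ b h3, m.mul_eq_sum lam a b h1', m.mul_eq_sum lam a' b h2',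
    ← Finset.sum_add_distrib]
  exact Finset.sum_congr rfl fun n _ => by rw [map_add, LinearMap.add_apply, smul_add]

lemma mul_smul_left (m : ConformalProduct L) (lam : ℂ) (c : ℂ) (a b : L) :
    m.mul lam (c • a) b = c • m.mul lam a b := by
  obtain ⟨N, h⟩ := m.coeff_finite a b
  have h' : ∀ n, N ≤ n → m.coeff n (c • a) b = 0 := fun n hn => by
    rw [map_smul, LinearMap.smul_apply, h n hn, smul_zero]
  rw [m.mul_eq_sum lam _ b h', m.mul_eq_sum lam a b h, Finset.smul_sum]
  exact Finset.sum_congr rfl fun n _ => by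
    rw [map_smul, LinearMap.smul_apply, smul_comm]

lemma mul_add_right (m : ConformalProduct L) (lam : ℂ) (a b b' : L) :
    m.mul lam a (b + b') = m.mul lam a b + m.mul lam a b' := by
  obtain ⟨N1, h1⟩ := m.coeff_finite a b
  obtain ⟨N2, h2⟩ := m.coeff_finite a b'
  have h1' : ∀ n, max N1 N2 ≤ n → m.coeff n a b = 0 := fun n hn => h1 n (le_trans (le_max_left _ _) hn)
  have h2' : ∀ n, max N1 N2 ≤ n → m.coeff n a b' = 0 := fun n hn => h2 n (le_trans (le_max_right _ _) hn)
  have h3 : ∀ n, max N1 N2 ≤ n → m.coeff n a (b + b') = 0 := fun n hn => by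
    rw [map_add, h1' n hn, h2' n hn, add_zero]
  rw [m.mul_eq_sum lam a _ h3, m.mul_eq_sum lam a b h1', m.mul_eq_sum lam a b' h2',
    ← Finset.sum_add_distrib]
  exact Finset.sum_congr rfl fun n _ => by rw [map_add, smul_add]

lemma mul_smul_right (m : ConformalProduct L) (lam : ℂ) (c : ℂ) (a b : L) :
    m.mul lam a (c • b) = c • m.mul lam a b := by
  obtain ⟨N, h⟩ := m.coeff_finite a b
  have h' : ∀ n, N ≤ n → m.coeff n a (c • b) = 0 := fun n hn => by
    rw [map_smul, h n hn, smul_zero]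
  rw [m.mul_eq_sum lam a _ h', m.mul_eq_sum lam a b h, Finset.smul_sum]
  exact Finset.sum_congr rfl fun n _ => by rw [map_smul, smul_comm]

/-- `a ↦ m.mul lam a b` as a linear map. -/
def mulLeftLM (m : ConformalProduct L) (lam : ℂ) (b : L) : L →ₗ[ℂ] L where
  toFun a := m.mul lam a b
  map_add' a a' := m.mul_add_left lam a a' b
  map_smul' c a := m.mul_smul_left lam c a b

/-- `b ↦ m.mul lam a b` as a linear map. -/
def mulRightLM (m : ConformalProduct L) (lam : ℂ) (a : L) : L →ₗ[ℂ] L where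
  toFun b := m.mul lam a b
  map_add' b b' := m.mul_add_right lam a b b'
  map_smul' c b := m.mul_smul_right lam c a b

@[simp] lemma mulLeftLM_apply (m : ConformalProduct L) (lam : ℂ) (a b : L) :
    m.mulLeftLM lam b a = m.mul lam a b := rfl

@[simp] lemma mulRightLM_apply (m : ConformalProduct L) (lam : ℂ) (a b : L) :
    m.mulRightLM lam a b = m.mul lam a b := rfl

lemma mul_neg_right (m : ConformalProduct L) (lam : ℂ) (a b : L) :
    m.mul lam a (-b) = -m.mul lam a b := map_neg (m.mulRightLM lam a) b

lemma mul_Xpow_left (m : ConformalProduct L)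
    (hs : ∀ (lam : ℂ) (a b : L), m.mul lam ((X : Polynomial ℂ) • a) b = (-lam) • m.mul lam a b)
    (lam : ℂ) (n : ℕ) (a b : L) :
    m.mul lam (((X : Polynomial ℂ) ^ n) • a) b = ((-lam) ^ n) • m.mul lam a b := by
  induction n with
  | zero => simp
  | succ n ih =>
      rw [pow_succ', mul_smul, hs, ih, smul_smul, ← pow_succ']

lemma mul_poly_left (m : ConformalProduct L)
    (hs : ∀ (lam : ℂ) (a b : L), m.mul lam ((X : Polynomial ℂ) • a) b = (-lam) • m.mul lam a b)
    (lam : ℂ) (q : Polynomial ℂ) (a b : L) :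
    m.mul lam (q • a) b = (q.eval (-lam)) • m.mul lam a b := by
  induction q using Polynomial.induction_on' with
  | add p q hp hq =>
      rw [add_smul, m.mul_add_left, hp, hq, eval_add, add_smul]
  | monomial n c =>
      rw [← C_mul_X_pow_eq_monomial, mul_smul, Csmul, m.mul_smul_left, m.mul_Xpow_left hs,
        smul_smul, eval_mul, eval_pow, eval_C, eval_X]

lemma mul_Xpow_right (m : ConformalProduct L)
    (hs : ∀ (lam : ℂ) (a b : L), m.mul lam a ((X : Polynomial ℂ) • b)
      = (X : Polynomial ℂ) • m.mul lam a b + lam • m.mul lam a b)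
    (lam : ℂ) (n : ℕ) (a b : L) :
    m.mul lam a (((X : Polynomial ℂ) ^ n) • b)
      = (((X : Polynomial ℂ) + C lam) ^ n) • m.mul lam a b := by
  induction n with
  | zero => simp
  | succ n ih =>
      rw [pow_succ', mul_smul, hs, ih,
        ← Csmul lam (((X : Polynomial ℂ) + C lam) ^ n • m.mul lam a b),
        ← mul_smul, ← mul_smul, ← add_smul, ← add_mul, ← pow_succ']

lemma mul_poly_right (m : ConformalProduct L)
    (hs : ∀ (lam : ℂ) (a b : L), m.mul lam a ((X : Polynomial ℂ) • b)
      = (X : Polynomial ℂ) • m.mul lam a b + lam • m.mul lam a b)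
    (lam : ℂ) (q : Polynomial ℂ) (a b : L) :
    m.mul lam a (q • b) = (Polynomial.aeval ((X : Polynomial ℂ) + C lam) q) • m.mul lam a b := by
  induction q using Polynomial.induction_on' with
  | add p q hp hq =>
      rw [add_smul, m.mul_add_right, hp, hq, map_add, add_smul]
  | monomial n c =>
      rw [← C_mul_X_pow_eq_monomial, mul_smul, Csmul, m.mul_smul_right, m.mul_Xpow_right hs,
        map_mul, map_pow, aeval_X, aeval_C, Polynomial.algebraMap_eq, mul_smul, Csmul]

end ConformalProduct

section Lifting

open Finset

/-- If a polynomial family with values in `L` vanishes at every complex point,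
all its coefficients vanish. -/
lemma vanish {N : ℕ} (v : ℕ → L)
    (h : ∀ α : ℂ, ∑ n ∈ Finset.range N, α ^ n • v n = 0) :
    ∀ n ∈ Finset.range N, v n = 0 := by
  intro n hn
  rw [← Module.forall_dual_apply_eq_zero_iff ℂ]
  intro φ
  set p : Polynomial ℂ := ∑ k ∈ Finset.range N, C (φ (v k)) * X ^ k with hp
  have hpz : p = 0 := by
    apply Polynomial.funext
    intro r
    have h2 := congrArg φ (h r)
    rw [map_sum, map_zero] at h2
    simp only [hp, eval_zero, Polynomial.eval_finset_sum, eval_mul, eval_C, eval_pow, eval_X]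
    rw [← h2]
    exact Finset.sum_congr rfl fun k _ => by rw [map_smul, smul_eq_mul, mul_comm]
  have hc : p.coeff n = φ (v n) := by
    simp only [hp, Polynomial.finset_sum_coeff, Polynomial.coeff_C_mul,
      Polynomial.coeff_X_pow, mul_ite, mul_one, mul_zero]
    rw [Finset.sum_ite_eq (Finset.range N) n (fun k => φ (v k))]
    simp [hn]
  rw [← hc, hpz, Polynomial.coeff_zero]

/-- Binomial re-expansion of a shifted family, uniformly in the (polynomial) variable. -/
lemma shift_sum {N : ℕ} (b : ℕ → L) (lam : ℂ) (Q : Polynomial ℂ) :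
    ∑ q ∈ Finset.range N, ((Q + C lam) ^ q) • b q
      = ∑ mm ∈ Finset.range N,
          (Q ^ mm) • ∑ q ∈ Finset.range N, ((q.choose mm : ℂ) * lam ^ (q - mm)) • b q := by
  have step : ∀ q ∈ Finset.range N, ((Q + C lam) ^ q) • b q
      = ∑ mm ∈ Finset.range N, (Q ^ mm) • (((q.choose mm : ℂ) * lam ^ (q - mm)) • b q) := by
    intro q hq
    rw [add_pow, Finset.sum_smul]
    rw [Finset.sum_subset (Finset.range_subset_range.2 (Finset.mem_range.1 hq))]
    · refine Finset.sum_congr rfl fun mm _ => ?_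
      have : (Q ^ mm * (C lam) ^ (q - mm) * ((q.choose mm : ℕ) : Polynomial ℂ))
          = Q ^ mm * C ((q.choose mm : ℂ) * lam ^ (q - mm)) := by
        rw [← Polynomial.C_pow, ← Polynomial.C_eq_natCast, mul_assoc, ← Polynomial.C_mul,
          mul_comm (lam ^ (q - mm))]
      rw [this, mul_smul, Csmul]
    · intro mm _ hmm
      have : q.choose mm = 0 := Nat.choose_eq_zero_of_lt (by
        simp only [Finset.mem_range, not_lt] at hmm; omega)
      rw [this]
      simp
  rw [Finset.sum_congr rfl step, Finset.sum_comm]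
  exact Finset.sum_congr rfl fun mm _ => (Finset.smul_sum).symm

/-- The substitution principle: a polynomial-family identity (with one shifted block)
valid at all complex points remains valid for an arbitrary polynomial scalar. -/
lemma key {N : ℕ} (v bb u : ℕ → L) (lam : ℂ)
    (h : ∀ α : ℂ, ∑ n ∈ Finset.range N, α ^ n • v n
        = (∑ n ∈ Finset.range N, (α + lam) ^ n • bb n) + ∑ n ∈ Finset.range N, α ^ n • u n)
    (P : Polynomial ℂ) :
    ∑ n ∈ Finset.range N, (P ^ n) • v n
      = (∑ n ∈ Finset.range N, ((P + C lam) ^ n) • bb n)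
          + ∑ n ∈ Finset.range N, (P ^ n) • u n := by
  set b' : ℕ → L := fun mm => ∑ q ∈ Finset.range N, ((q.choose mm : ℂ) * lam ^ (q - mm)) • bb q
    with hb'
  have hz : ∀ n ∈ Finset.range N, v n - (b' n + u n) = 0 := by
    apply vanish
    intro α
    have h2 : ∑ n ∈ Finset.range N, (α + lam) ^ n • bb n
        = ∑ mm ∈ Finset.range N, α ^ mm • b' mm := by
      have h3 := shift_sum (N := N) bb lam (C α)
      calc ∑ n ∈ Finset.range N, (α + lam) ^ n • bb n
          = ∑ n ∈ Finset.range N, ((C α + C lam) ^ n) • bb n := by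
            refine Finset.sum_congr rfl fun n _ => ?_
            rw [← Polynomial.C_add, Cpow_smul]
        _ = ∑ mm ∈ Finset.range N, ((C α : Polynomial ℂ) ^ mm) • b' mm := h3
        _ = ∑ mm ∈ Finset.range N, α ^ mm • b' mm := by
            exact Finset.sum_congr rfl fun mm _ => Cpow_smul α mm _
    rw [Finset.sum_congr rfl (fun n (_ : n ∈ Finset.range N) => by
      rw [smul_sub, smul_add] :
      ∀ n ∈ Finset.range N, α ^ n • (v n - (b' n + u n))
        = α ^ n • v n - (α ^ n • b' n + α ^ n • u n))]
    rw [Finset.sum_sub_distrib, Finset.sum_add_distrib, h α, h2]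
    abel
  have h4 : ∀ n ∈ Finset.range N, v n = b' n + u n := fun n hn => by
    have := hz n hn; rwa [sub_eq_zero] at this
  calc ∑ n ∈ Finset.range N, (P ^ n) • v n
      = ∑ n ∈ Finset.range N, ((P ^ n) • b' n + (P ^ n) • u n) := by
        refine Finset.sum_congr rfl fun n hn => ?_
        rw [h4 n hn, smul_add]
    _ = (∑ n ∈ Finset.range N, (P ^ n) • b' n) + ∑ n ∈ Finset.range N, (P ^ n) • u n := by
        rw [Finset.sum_add_distrib]
    _ = (∑ n ∈ Finset.range N, ((P + C lam) ^ n) • bb n)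
          + ∑ n ∈ Finset.range N, (P ^ n) • u n := by
        rw [shift_sum (N := N) bb lam P]

end Lifting

section Swap

open Finset

lemma flip_neg (c : ℂ) (hc : c * c = 1) {p q : L} (h : p = -(c • q)) : q = -(c • p) := by
  rw [h, smul_neg, smul_smul, hc, one_smul, neg_neg]

lemma flip_pos (c : ℂ) (hc : c * c = 1) {p q : L} (h : p = c • q) : q = c • p := by
  rw [h, smul_smul, hc, one_smul]

namespace ConformalProduct

lemma mul_sum_left (m : ConformalProduct L) (lam : ℂ) {s : Finset ℕ} (f : ℕ → L) (b : L) :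
    m.mul lam (∑ n ∈ s, f n) b = ∑ n ∈ s, m.mul lam (f n) b :=
  map_sum (m.mulLeftLM lam b) f s

lemma mul_sum_right (m : ConformalProduct L) (lam : ℂ) {s : Finset ℕ} (a : L) (f : ℕ → L) :
    m.mul lam a (∑ n ∈ s, f n) = ∑ n ∈ s, m.mul lam a (f n) :=
  map_sum (m.mulRightLM lam a) f s

/-- Composition of conformal sesquilinearity: feeding `a ∘_{-∂-c} b` into the first slot
of a product at level `r` replaces `-∂-c` by `r - c`. -/
lemma swap_left (br m : ConformalProduct L)
    (hs : ∀ (lam : ℂ) (a b : L), br.mul lam ((X : Polynomial ℂ) • a) b = (-lam) • br.mul lam a b)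
    (r c : ℂ) (a b d : L) :
    br.mul r (m.cmul c a b) d = br.mul r (m.mul (r - c) a b) d := by
  obtain ⟨N, hN⟩ := m.coeff_finite a b
  rw [m.cmul_eq_sum c a b hN, m.mul_eq_sum (r - c) a b hN, br.mul_sum_left, br.mul_sum_left]
  refine Finset.sum_congr rfl fun n _ => ?_
  rw [br.mul_poly_left hs, br.mul_smul_left]
  congr 1
  rw [eval_pow]
  congr 1
  simp only [eval_neg, eval_add, eval_X, eval_C]
  ring

/-- Composition of conformal sesquilinearity in the second slot. -/
lemma swap_right (br m : ConformalProduct L)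
    (hs : ∀ (lam : ℂ) (a b : L), br.mul lam a ((X : Polynomial ℂ) • b)
        = (X : Polynomial ℂ) • br.mul lam a b + lam • br.mul lam a b)
    (lam c : ℂ) (x a b : L) {N : ℕ} (hN : ∀ n, N ≤ n → m.coeff n a b = 0) :
    br.mul lam x (m.cmul c a b)
      = ∑ p ∈ Finset.range N,
          ((-((X : Polynomial ℂ) + C (lam + c))) ^ p) • br.mul lam x (m.coeff p a b) := by
  rw [m.cmul_eq_sum c a b hN, br.mul_sum_right]
  refine Finset.sum_congr rfl fun p _ => ?_
  rw [br.mul_poly_right hs]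
  congr 1
  rw [map_pow]
  congr 1
  rw [map_neg, map_add, aeval_X, aeval_C, Polynomial.algebraMap_eq, Polynomial.C_add]
  ring

end ConformalProduct

lemma mul_mem (S : SuperModule L) (m : ConformalProduct L)
    (he : ∀ (i j : ZMod 2) (a b : L), a ∈ S.grade i → b ∈ S.grade j →
      ∀ n : ℕ, m.coeff n a b ∈ S.grade (i + j))
    {i j : ZMod 2} {a b : L} (ha : a ∈ S.grade i) (hb : b ∈ S.grade j) (lam : ℂ) :
    m.mul lam a b ∈ S.grade (i + j) := by
  obtain ⟨N, hN⟩ := m.coeff_finite a b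
  rw [m.mul_eq_sum lam a b hN]
  exact Submodule.sum_mem _ fun n _ => Submodule.smul_mem _ _ (he i j a b ha hb n)

end Swap

end Aux

/-- the cyclic identity (3.14) in a transposed Poisson conformal superalgebra. -/
theorem statement_0 (S : SuperModule L) (m br : ConformalProduct L)
    (hT : IsTPCSA S m br) (i j k : ZMod 2) (x y z : L)
    (hx : x ∈ S.grade i) (hy : y ∈ S.grade j) (hz : z ∈ S.grade k) (lam mu : ℂ) :
    sgn i k • m.mul lam x (br.mul mu y z)
      + sgn i j • m.mul mu y (br.cmul lam z x)
      + sgn j k • m.cmul (lam + mu) z (br.mul lam x y) = 0 := by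
  obtain ⟨hCA, hLie, hTL⟩ := hT
  have bsl := hLie.toIsLambdaProduct.sesq_left
  have bsr := hLie.toIsLambdaProduct.sesq_right
  -- grading of the two auxiliary products
  have hw : br.mul lam x y ∈ S.grade (i + j) :=
    mul_mem S br hLie.toIsLambdaProduct.even hx hy lam
  have hw' : m.mul lam x z ∈ S.grade (i + k) :=
    mul_mem S m hCA.toIsLambdaProduct.even hx hz lam
  -- bounds
  obtain ⟨N1, hN1⟩ := m.coeff_finite z (br.mul lam x y)
  obtain ⟨N2, hN2⟩ := br.coeff_finite (m.mul lam x z) y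
  obtain ⟨N3, hN3⟩ := m.coeff_finite z y
  have hN1' : ∀ n, max (max N1 N2) N3 ≤ n → m.coeff n z (br.mul lam x y) = 0 :=
    fun n hn => hN1 n (le_trans (le_trans (le_max_left N1 N2) (le_max_left _ N3)) hn)
  have hN2' : ∀ n, max (max N1 N2) N3 ≤ n → br.coeff n (m.mul lam x z) y = 0 :=
    fun n hn => hN2 n (le_trans (le_trans (le_max_right N1 N2) (le_max_left _ N3)) hn)
  have hN3' : ∀ n, max (max N1 N2) N3 ≤ n → m.coeff n z y = 0 :=
    fun n hn => hN3 n (le_trans (le_max_right _ N3) hn)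
  set N : ℕ := max (max N1 N2) N3 with hNdef
  -- the three coefficient families
  set v : ℕ → L := fun n => (2 : ℂ) • m.coeff n z (br.mul lam x y) with hv
  set bb : ℕ → L := fun n => sgn k i • br.coeff n (m.mul lam x z) y with hbb
  set u : ℕ → L := fun n => sgn k i • br.mul lam x (m.coeff n z y) with hu
  -- the complex-valued instance of the third transposed Leibniz rule
  have hyp : ∀ α : ℂ, ∑ n ∈ Finset.range N, α ^ n • v n
      = (∑ n ∈ Finset.range N, (α + lam) ^ n • bb n) + ∑ n ∈ Finset.range N, α ^ n • u n := by
    intro α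
    have hTL3 := hTL k i z x hz hx y α lam
    have hc2 := hCA.comm k i z x hz hx α
    have hzero : α + lam - α = lam := by ring
    have hbridge : br.mul (α + lam) (m.mul α z x) y
        = sgn k i • br.mul (α + lam) (m.mul lam x z) y := by
      rw [hc2, br.mul_smul_left, ConformalProduct.swap_left br m bsl (α + lam) α x z y, hzero]
    have hLHS : ∑ n ∈ Finset.range N, α ^ n • v n
        = (2 : ℂ) • m.mul α z (br.mul lam x y) := by
      rw [m.mul_eq_sum α z (br.mul lam x y) hN1', Finset.smul_sum]
      exact Finset.sum_congr rfl fun n _ => by rw [hv]; exact smul_comm _ _ _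
    have hRHS1 : ∑ n ∈ Finset.range N, (α + lam) ^ n • bb n
        = sgn k i • br.mul (α + lam) (m.mul lam x z) y := by
      rw [br.mul_eq_sum (α + lam) (m.mul lam x z) y hN2', Finset.smul_sum]
      exact Finset.sum_congr rfl fun n _ => by rw [hbb]; exact smul_comm _ _ _
    have hRHS2 : ∑ n ∈ Finset.range N, α ^ n • u n
        = sgn k i • br.mul lam x (m.mul α z y) := by
      rw [m.mul_eq_sum α z y hN3', br.mul_sum_right, Finset.smul_sum]
      refine Finset.sum_congr rfl fun n _ => ?_
      rw [hu, br.mul_smul_right]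
      exact smul_comm _ _ _
    rw [hLHS, hRHS1, hRHS2, ← hbridge]
    exact hTL3
  have hKey := key (L := L) v bb u lam hyp (-((X : Polynomial ℂ) + C (lam + mu)))
  -- interpret the three polynomial sums
  have hL : ∑ n ∈ Finset.range N, ((-((X : Polynomial ℂ) + C (lam + mu))) ^ n) • v n
      = (2 : ℂ) • m.cmul (lam + mu) z (br.mul lam x y) := by
    rw [m.cmul_eq_sum (lam + mu) z (br.mul lam x y) hN1', Finset.smul_sum]
    exact Finset.sum_congr rfl fun n _ => by rw [hv]; exact csmul_comm _ _ _
  have hP : (-((X : Polynomial ℂ) + C (lam + mu))) + C lam = -((X : Polynomial ℂ) + C mu) := by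
    rw [Polynomial.C_add]; ring
  have hM : ∑ n ∈ Finset.range N, (((-((X : Polynomial ℂ) + C (lam + mu))) + C lam) ^ n) • bb n
      = sgn k i • br.cmul mu (m.mul lam x z) y := by
    rw [hP, br.cmul_eq_sum mu (m.mul lam x z) y hN2', Finset.smul_sum]
    exact Finset.sum_congr rfl fun n _ => by rw [hbb]; exact csmul_comm _ _ _
  have hU : ∑ n ∈ Finset.range N, ((-((X : Polynomial ℂ) + C (lam + mu))) ^ n) • u n
      = sgn k i • br.mul lam x (m.cmul mu z y) := by
    rw [ConformalProduct.swap_right br m bsr lam mu x z y hN3', Finset.smul_sum]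
    exact Finset.sum_congr rfl fun n _ => by rw [hu]; exact csmul_comm _ _ _
  rw [hL, hM, hU] at hKey
  -- hKey : 2 • m.cmul (lam+mu) z (br.mul lam x y)
  --   = sgn k i • br.cmul mu (m.mul lam x z) y + sgn k i • br.mul lam x (m.cmul mu z y)
  have hcm1 : br.cmul mu (m.mul lam x z) y
      = -(sgn j (i + k) • br.mul mu y (m.mul lam x z)) :=
    flip_neg _ (sgn_sq j (i + k)) (hLie.skew j (i + k) y (m.mul lam x z) hy hw' mu)
  have hcm2 : m.cmul mu z y = sgn j k • m.mul mu y z :=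
    flip_pos _ (sgn_sq j k) (hCA.comm j k y z hy hz mu)
  have hcomm3 := hCA.comm (i + j) k (br.mul lam x y) z hw hz (lam + mu)
  -- the third double-product identity
  have h2T3 : (2 : ℂ) • m.mul (lam + mu) (br.mul lam x y) z
      = br.mul lam x (m.mul mu y z) - sgn i j • br.mul mu y (m.mul lam x z) := by
    calc (2 : ℂ) • m.mul (lam + mu) (br.mul lam x y) z
        = sgn (i + j) k • ((2 : ℂ) • m.cmul (lam + mu) z (br.mul lam x y)) := by
          rw [hcomm3, smul_comm]
      _ = sgn (i + j) k • (sgn k i • (-(sgn j (i + k) • br.mul mu y (m.mul lam x z)))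
            + sgn k i • (sgn j k • br.mul lam x (m.mul mu y z))) := by
          rw [hKey, hcm1, hcm2, br.mul_smul_right]
      _ = -((sgn (i + j) k * (sgn k i * sgn j (i + k))) • br.mul mu y (m.mul lam x z))
            + (sgn (i + j) k * (sgn k i * sgn j k)) • br.mul lam x (m.mul mu y z) := by
          simp only [smul_add, smul_neg, smul_smul]
      _ = br.mul lam x (m.mul mu y z) - sgn i j • br.mul mu y (m.mul lam x z) := by
          rw [sgnA, sgnB, one_smul]; abel
  -- first two double-product identities
  have h2T1 := hTL i j x y hx hy z lam mu
  have h2T2 : (2 : ℂ) • m.mul mu y (br.mul lam x z)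
      = sgn i j • br.mul (lam + mu) (m.mul lam x y) z
        + sgn i j • br.mul lam x (m.mul mu y z) := by
    have hTL2 := hTL j i y x hy hx z mu lam
    have hc := hCA.comm j i y x hy hx mu
    have hzero2 : mu + lam - mu = lam := by ring
    have hbr2 : br.mul (mu + lam) (m.mul mu y x) z
        = sgn i j • br.mul (lam + mu) (m.mul lam x y) z := by
      rw [hc, br.mul_smul_left, ConformalProduct.swap_left br m bsl (mu + lam) mu x y z,
        hzero2, add_comm mu lam, sgn_comm' j i]
    rw [hbr2, sgn_comm' j i] at hTL2
    exact hTL2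
  -- combine
  have h6 : (2 : ℂ) • (m.mul lam x (br.mul mu y z)
      - sgn i j • m.mul mu y (br.mul lam x z)
      + m.mul (lam + mu) (br.mul lam x y) z) = 0 := by
    rw [smul_add, smul_sub, h2T1, smul_comm (2 : ℂ) (sgn i j), h2T2, h2T3]
    rw [smul_add, smul_smul, smul_smul, sgn_sq, one_smul, one_smul]
    abel
  have hfin : m.mul lam x (br.mul mu y z)
      - sgn i j • m.mul mu y (br.mul lam x z)
      + m.mul (lam + mu) (br.mul lam x y) z = 0 := by
    have h7 := congrArg (fun w => ((2 : ℂ)⁻¹) • w) h6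
    simp only [smul_zero] at h7
    rwa [smul_smul, inv_mul_cancel₀ (two_ne_zero), one_smul] at h7
  -- finish: rewrite the goal
  have h1 : br.cmul lam z x = -(sgn i k • br.mul lam x z) :=
    flip_neg _ (sgn_sq i k) (hLie.skew i k x z hx hz lam)
  have h2 : m.cmul (lam + mu) z (br.mul lam x y)
      = sgn (i + j) k • m.mul (lam + mu) (br.mul lam x y) z :=
    flip_pos _ (sgn_sq (i + j) k) hcomm3
  rw [h1, h2, m.mul_neg_right, m.mul_smul_right]
  rw [smul_neg, smul_smul, smul_smul, sgnC]
  have hre : sgn i k • m.mul lam x (br.mul mu y z)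
      + -((sgn i j * sgn i k) • m.mul mu y (br.mul lam x z))
      + sgn i k • m.mul (lam + mu) (br.mul lam x y) z
      = sgn i k • (m.mul lam x (br.mul mu y z)
        - sgn i j • m.mul mu y (br.mul lam x z)
        + m.mul (lam + mu) (br.mul lam x y) z) := by
    rw [smul_add, smul_sub, smul_smul, mul_comm (sgn i k) (sgn i j)]
    abel
  rw [hre, hfin, smul_zero]
end TPCSAFormal
end
end

section
/- Let (L, ∘_λ, [·_λ ·]) be a transposed Poisson conformal superalgebra. Then for all homogeneous h, x, y, z ∈ L the following identity holds: (−1)^{|x||z|} [(h ∘_λ x)_{λ+γ} [y_{μ−γ} z]] + (−1)^{|x||y|} [(h ∘_λ y)_{λ+μ−γ} [z_{−∂−γ} x]] + (−1)^{|y||z|} [(h ∘_λ z)_{−∂−μ} [x_γ y]] = 0. -/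
open Polynomial
open scoped TensorProduct

noncomputable section

namespace TPCSAFormal

variable (L : Type*) [AddCommGroup L] [Module ℂ L]
  [Module (Polynomial ℂ) L] [IsScalarTower ℂ (Polynomial ℂ) L]

variable {L}

private lemma aux_finsum_eq {M : Type*} [AddCommMonoid M] (f : ℕ → M) (N : ℕ)
    (h : ∀ n, N ≤ n → f n = 0) : ∑ᶠ n, f n = ∑ n ∈ Finset.range N, f n := by
  apply finsum_eq_finset_sum_of_support_subset
  intro n hn
  simp only [Function.mem_support] at hn
  simp only [Finset.coe_range, Set.mem_Iio]
  by_contra hc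
  exact hn (h n (le_of_not_gt hc))

lemma ConformalProduct.mul_eq_sum_s3 (m : ConformalProduct L) (lam : ℂ) (a b : L) {N : ℕ}
    (hN : ∀ n, N ≤ n → m.coeff n a b = 0) :
    m.mul lam a b = ∑ n ∈ Finset.range N, lam ^ n • m.coeff n a b :=
  aux_finsum_eq _ N (fun n hn => by rw [hN n hn, smul_zero])

lemma aux_mul_mem {S : SuperModule L} {m : ConformalProduct L} (hm : IsLambdaProduct S m)
    {i j : ZMod 2} {a b : L} (ha : a ∈ S.grade i) (hb : b ∈ S.grade j) (lam : ℂ) :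
    m.mul lam a b ∈ S.grade (i + j) := by
  obtain ⟨N, hN⟩ := m.coeff_finite a b
  rw [m.mul_eq_sum_s3 lam a b hN]
  exact Submodule.sum_mem _ fun n _ => Submodule.smul_mem _ _ (hm.even i j a b ha hb n)

lemma ConformalProduct.mul_add_right_s3 (m : ConformalProduct L) (lam : ℂ) (a b c : L) :
    m.mul lam a (b + c) = m.mul lam a b + m.mul lam a c := by
  obtain ⟨N1, h1⟩ := m.coeff_finite a b
  obtain ⟨N2, h2⟩ := m.coeff_finite a c
  have hb : ∀ n, max N1 N2 ≤ n → m.coeff n a b = 0 :=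
    fun n hn => h1 n (le_trans (le_max_left _ _) hn)
  have hc : ∀ n, max N1 N2 ≤ n → m.coeff n a c = 0 :=
    fun n hn => h2 n (le_trans (le_max_right _ _) hn)
  have hbc : ∀ n, max N1 N2 ≤ n → m.coeff n a (b + c) = 0 :=
    fun n hn => by rw [map_add, hb n hn, hc n hn, add_zero]
  rw [m.mul_eq_sum_s3 lam a (b + c) hbc, m.mul_eq_sum_s3 lam a b hb, m.mul_eq_sum_s3 lam a c hc,
    ← Finset.sum_add_distrib]
  exact Finset.sum_congr rfl fun n _ => by rw [map_add, smul_add]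

lemma ConformalProduct.mul_smul_right_s3 (m : ConformalProduct L) (lam r : ℂ) (a b : L) :
    m.mul lam a (r • b) = r • m.mul lam a b := by
  obtain ⟨N, hN⟩ := m.coeff_finite a b
  have hrb : ∀ n, N ≤ n → m.coeff n a (r • b) = 0 :=
    fun n hn => by rw [map_smul, hN n hn, smul_zero]
  rw [m.mul_eq_sum_s3 lam a (r • b) hrb, m.mul_eq_sum_s3 lam a b hN, Finset.smul_sum]
  exact Finset.sum_congr rfl fun n _ => by rw [map_smul, smul_comm]

lemma ConformalProduct.mul_add_left_s3 (m : ConformalProduct L) (lam : ℂ) (a b c : L) :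
    m.mul lam (a + b) c = m.mul lam a c + m.mul lam b c := by
  obtain ⟨N1, h1⟩ := m.coeff_finite a c
  obtain ⟨N2, h2⟩ := m.coeff_finite b c
  have ha : ∀ n, max N1 N2 ≤ n → m.coeff n a c = 0 :=
    fun n hn => h1 n (le_trans (le_max_left _ _) hn)
  have hb : ∀ n, max N1 N2 ≤ n → m.coeff n b c = 0 :=
    fun n hn => h2 n (le_trans (le_max_right _ _) hn)
  have hab : ∀ n, max N1 N2 ≤ n → m.coeff n (a + b) c = 0 :=
    fun n hn => by rw [map_add, LinearMap.add_apply, ha n hn, hb n hn, add_zero]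
  rw [m.mul_eq_sum_s3 lam (a + b) c hab, m.mul_eq_sum_s3 lam a c ha, m.mul_eq_sum_s3 lam b c hb,
    ← Finset.sum_add_distrib]
  exact Finset.sum_congr rfl fun n _ => by rw [map_add, LinearMap.add_apply, smul_add]

lemma ConformalProduct.mul_smul_left_s3 (m : ConformalProduct L) (lam r : ℂ) (a b : L) :
    m.mul lam (r • a) b = r • m.mul lam a b := by
  obtain ⟨N, hN⟩ := m.coeff_finite a b
  have hra : ∀ n, N ≤ n → m.coeff n (r • a) b = 0 :=
    fun n hn => by rw [map_smul, LinearMap.smul_apply, hN n hn, smul_zero]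
  rw [m.mul_eq_sum_s3 lam (r • a) b hra, m.mul_eq_sum_s3 lam a b hN, Finset.smul_sum]
  exact Finset.sum_congr rfl fun n _ => by rw [map_smul, LinearMap.smul_apply, smul_comm]

lemma sgn_mul_self (a b : ZMod 2) : sgn a b * sgn a b = 1 := by
  unfold sgn; rw [← pow_add]; exact Even.neg_one_pow ⟨_, rfl⟩

/-- the identity (3.17) in a transposed Poisson conformal superalgebra. -/
theorem statement_3 (S : SuperModule L) (m br : ConformalProduct L)
    (hT : IsTPCSA S m br) (l i j k : ZMod 2) (h x y z : L)
    (hh : h ∈ S.grade l) (hx : x ∈ S.grade i) (hy : y ∈ S.grade j) (hz : z ∈ S.grade k)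
    (lam mu gam : ℂ) :
    sgn i k • br.mul (lam + gam) (m.mul lam h x) (br.mul (mu - gam) y z)
      + sgn i j • br.mul (lam + mu - gam) (m.mul lam h y) (br.cmul gam z x)
      + sgn j k • br.cmul mu (m.mul lam h z) (br.mul gam x y) = 0 := by
  have two : ∀ a : ZMod 2, a = 0 ∨ a = 1 := by decide
  have F3 : sgn l (i + j) = sgn l i * sgn l j := by
    rcases two l with rfl | rfl <;> rcases two i with rfl | rfl <;> rcases two j with rfl | rfl <;>
      norm_num [sgn, show ((2:ZMod 2)).val = 0 from rfl, show ((1:ZMod 2)).val = 1 from rfl,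
        show ((0:ZMod 2)).val = 0 from rfl]
  have F4 : sgn (l + i) j = sgn l j * sgn i j := by
    rcases two l with rfl | rfl <;> rcases two i with rfl | rfl <;> rcases two j with rfl | rfl <;>
      norm_num [sgn, show ((2:ZMod 2)).val = 0 from rfl, show ((1:ZMod 2)).val = 1 from rfl,
        show ((0:ZMod 2)).val = 0 from rfl]
  have F5 : sgn i (l + j) = sgn l i * sgn i j := by
    rcases two l with rfl | rfl <;> rcases two i with rfl | rfl <;> rcases two j with rfl | rfl <;>
      norm_num [sgn, show ((2:ZMod 2)).val = 0 from rfl, show ((1:ZMod 2)).val = 1 from rfl,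
        show ((0:ZMod 2)).val = 0 from rfl]
  have F6 : sgn j k * sgn (i + j) (l + k) = sgn l i * sgn l j * sgn i k := by
    rcases two l with rfl | rfl <;> rcases two i with rfl | rfl <;> rcases two j with rfl | rfl <;>
      rcases two k with rfl | rfl <;>
      norm_num [sgn, show ((2:ZMod 2)).val = 0 from rfl, show ((1:ZMod 2)).val = 1 from rfl,
        show ((0:ZMod 2)).val = 0 from rfl]
  have hhx : m.mul lam h x ∈ S.grade (l + i) :=
    aux_mul_mem hT.commAssoc.toIsLambdaProduct hh hx lam
  have hhy : m.mul lam h y ∈ S.grade (l + j) :=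
    aux_mul_mem hT.commAssoc.toIsLambdaProduct hh hy lam
  have hhz : m.mul lam h z ∈ S.grade (l + k) :=
    aux_mul_mem hT.commAssoc.toIsLambdaProduct hh hz lam
  have hBxy : br.mul gam x y ∈ S.grade (i + j) :=
    aux_mul_mem hT.lie.toIsLambdaProduct hx hy gam
  -- transposed Leibniz instances
  have H1 := hT.transposedLeibniz l i h x hh hx (br.mul (mu - gam) y z) lam gam
  have H2 := hT.transposedLeibniz l j h y hh hy (br.mul gam x z) lam (mu - gam)
  rw [show lam + (mu - gam) = lam + mu - gam from by ring] at H2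
  have H3 := hT.transposedLeibniz l (i + j) h (br.mul gam x y) hh hBxy z lam mu
  rw [F3] at H3
  -- Jacobi instances
  have H4 := hT.lie.jacobi i j x y hx hy z gam (mu - gam)
  rw [show gam + (mu - gam) = mu from by ring] at H4
  have H4M := congrArg (fun t => m.mul lam h t) H4
  simp only [ConformalProduct.mul_add_right_s3, ConformalProduct.mul_smul_right_s3] at H4M
  have H5 := hT.transposedLeibniz l j h y hh hy z lam (mu - gam)
  rw [show lam + (mu - gam) = lam + mu - gam from by ring] at H5
  have H5x := congrArg (fun t => br.mul gam x t) H5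
  simp only [ConformalProduct.mul_add_right_s3, ConformalProduct.mul_smul_right_s3] at H5x
  have H6 := hT.transposedLeibniz l i h x hh hx z lam gam
  have H6y := congrArg (fun t => br.mul (mu - gam) y t) H6
  simp only [ConformalProduct.mul_add_right_s3, ConformalProduct.mul_smul_right_s3] at H6y
  have H7 := hT.transposedLeibniz l i h x hh hx y lam gam
  have H7z := congrArg (fun t => br.mul (lam + mu) t z) H7
  simp only [ConformalProduct.mul_add_left_s3, ConformalProduct.mul_smul_left_s3] at H7z
  have H8 := hT.lie.jacobi (l + i) j (m.mul lam h x) y hhx hy z (lam + gam) (mu - gam)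
  rw [show lam + gam + (mu - gam) = lam + mu from by ring, F4] at H8
  have H9 := hT.lie.jacobi i (l + j) x (m.mul lam h y) hx hhy z gam (lam + mu - gam)
  rw [show gam + (lam + mu - gam) = lam + mu from by ring, F5] at H9
  have H10 := hT.lie.jacobi i j x y hx hy (m.mul lam h z) gam (mu - gam)
  rw [show gam + (mu - gam) = mu from by ring] at H10
  -- skew-symmetry consequences
  have hc1 : br.cmul gam z x = (-(sgn i k)) • br.mul gam x z := by
    have hskew := hT.lie.skew i k x z hx hz gam
    have h1 : sgn i k • br.cmul gam z x = -(br.mul gam x z) := by rw [hskew, neg_neg]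
    calc br.cmul gam z x = (sgn i k * sgn i k) • br.cmul gam z x := by
          rw [sgn_mul_self, one_smul]
      _ = sgn i k • (sgn i k • br.cmul gam z x) := by rw [mul_smul]
      _ = sgn i k • (-(br.mul gam x z)) := by rw [h1]
      _ = (-(sgn i k)) • br.mul gam x z := by rw [smul_neg, neg_smul]
  have e2 : br.mul (lam + mu - gam) (m.mul lam h y) (br.cmul gam z x)
      = (-(sgn i k)) • br.mul (lam + mu - gam) (m.mul lam h y) (br.mul gam x z) := by
    rw [hc1, ConformalProduct.mul_smul_right_s3]
  have e3 : sgn j k • br.cmul mu (m.mul lam h z) (br.mul gam x y)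
      = -((sgn l i * sgn l j * sgn i k) •
          br.mul mu (br.mul gam x y) (m.mul lam h z)) := by
    have hskew := hT.lie.skew (i + j) (l + k) (br.mul gam x y) (m.mul lam h z) hBxy hhz mu
    have h1 : sgn (i + j) (l + k) • br.cmul mu (m.mul lam h z) (br.mul gam x y)
        = -(br.mul mu (br.mul gam x y) (m.mul lam h z)) := by rw [hskew, neg_neg]
    calc sgn j k • br.cmul mu (m.mul lam h z) (br.mul gam x y)
        = (sgn j k * (sgn (i + j) (l + k) * sgn (i + j) (l + k))) •
            br.cmul mu (m.mul lam h z) (br.mul gam x y) := by rw [sgn_mul_self, mul_one]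
      _ = (sgn j k * sgn (i + j) (l + k)) •
            (sgn (i + j) (l + k) • br.cmul mu (m.mul lam h z) (br.mul gam x y)) := by
          rw [← mul_smul]; ring_nf
      _ = (sgn j k * sgn (i + j) (l + k)) •
            (-(br.mul mu (br.mul gam x y) (m.mul lam h z))) := by rw [h1]
      _ = -((sgn j k * sgn (i + j) (l + k)) •
            br.mul mu (br.mul gam x y) (m.mul lam h z)) := by rw [smul_neg]
      _ = -((sgn l i * sgn l j * sgn i k) •
            br.mul mu (br.mul gam x y) (m.mul lam h z)) := by rw [F6]
  have hsqT6 : (sgn l i * sgn l i) • br.mul (lam + mu - gam) (m.mul lam h y) (br.mul gam x z)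
      = br.mul (lam + mu - gam) (m.mul lam h y) (br.mul gam x z) := by
    rw [sgn_mul_self, one_smul]
  linear_combination (norm := module) sgn i j • e2 + e3
    + (-(2 * sgn i k)) • H1 + (2 * (sgn i j * sgn i k)) • H2 + (2 * sgn i k) • H3
    + (4 * sgn i k) • H4M + (-(sgn l i * sgn i k)) • H5x
    + (sgn i j * sgn l j * sgn i k) • H6y + sgn i k • H7z + (-(sgn i k)) • H8
    + (-(sgn l i * sgn i k)) • H9 + (-(sgn l i * sgn l j * sgn i k)) • H10
    + (-(sgn i j * sgn i k)) • hsqT6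

end TPCSAFormal
end
end
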